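/- Let n ≥ 3 and let D_{2n} be the dihedral group of order 2n. Then β(P_{D_{2n}}) = β(P_{Z_n}) + n − 2, where Z_n is the cyclic group of order n. -/

import Mathlib

open SimpleGraph

/-- `W` is a resolving set for the graph `Γ`: any two distinct vertices are
distinguished by their distance to some element of `W`. -/
def IsResolvingSet {V : Type*} (Γ : SimpleGraph V) (W : Set V) : Prop :=
  ∀ u v : V, u ≠ v → ∃ w ∈ W, Γ.dist u w ≠ Γ.dist v w

/-- The metric dimension of a graph: the least cardinality of a resolving set. -/
noncomputable def metricDim {V : Type*} (Γ : SimpleGraph V) : ℕ :=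
  sInf {n | ∃ W : Set V, W.Finite ∧ W.ncard = n ∧ IsResolvingSet Γ W}

/-- A minimal resolving set: a resolving set no proper subset of which resolves. -/
def IsMinimalResolvingSet {V : Type*} (Γ : SimpleGraph V) (W : Set V) : Prop :=
  IsResolvingSet Γ W ∧ ∀ W' : Set V, W' ⊂ W → ¬ IsResolvingSet Γ W'

/-- Two vertices are twins if they have the same open neighborhood or the same
closed neighborhood. -/
def AreTwins {V : Type*} (Γ : SimpleGraph V) (u v : V) : Prop :=
  Γ.neighborSet u = Γ.neighborSet v ∨
    insert u (Γ.neighborSet u) = insert v (Γ.neighborSet v)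

/-- The twin class of a vertex. -/
def twinClass {V : Type*} (Γ : SimpleGraph V) (u : V) : Set V :=
  {v | AreTwins Γ u v}

/-- The number of twin classes of a graph. -/
noncomputable def twinClassCount {V : Type*} (Γ : SimpleGraph V) : ℕ :=
  {S : Set V | ∃ u : V, S = twinClass Γ u}.ncard

/-- Resolving sets of `Γ` have the exchange property. -/
def HasExchangeProperty {V : Type*} (Γ : SimpleGraph V) : Prop :=
  ∀ W₁ W₂ : Set V, IsMinimalResolvingSet Γ W₁ → IsMinimalResolvingSet Γ W₂ →
    ∀ u ∈ W₁, ∃ v ∈ W₂, IsMinimalResolvingSet Γ ((W₁ \ {u}) ∪ {v})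

/-- The (undirected) power graph of a group `G`: distinct `x`, `y` are adjacent
iff one is a positive power of the other. -/
def powerGraph (G : Type*) [Group G] : SimpleGraph G :=
  SimpleGraph.fromRel (fun x y => ∃ m : ℕ, 0 < m ∧ y = x ^ m)

/-- `R{x,y}`: the set of vertices having different distances to `x` and `y`. -/
def Rset {V : Type*} (Γ : SimpleGraph V) (x y : V) : Set V :=
  {z | Γ.dist x z ≠ Γ.dist y z}

set_option linter.unusedSectionVars false

section general

variable {G : Type*} [Group G]

lemma pg_adj {x y : G} : (powerGraph G).Adj x y ↔
    x ≠ y ∧ ((∃ m : ℕ, 0 < m ∧ y = x ^ m) ∨ (∃ m : ℕ, 0 < m ∧ x = y ^ m)) := by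
  simp [powerGraph, SimpleGraph.fromRel_adj]

variable [Finite G]

lemma pg_adj_one {x : G} (hx : x ≠ 1) : (powerGraph G).Adj x 1 :=
  pg_adj.2 ⟨hx, Or.inl ⟨orderOf x, orderOf_pos x, (pow_orderOf_eq_one x).symm⟩⟩

lemma pg_connected : (powerGraph G).Connected := by
  have : Nonempty G := ⟨1⟩
  refine ⟨fun u v => ?_⟩
  by_cases huv : u = v
  · subst huv; rfl
  by_cases hu : u = 1
  · subst hu
    exact ((pg_adj_one (Ne.symm huv)).symm).reachable
  by_cases hv : v = 1
  · subst hv; exact (pg_adj_one hu).reachable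
  exact (pg_adj_one hu).reachable.trans ((pg_adj_one hv).symm).reachable

lemma pg_dist_adj {x y : G} (h : (powerGraph G).Adj x y) : (powerGraph G).dist x y = 1 :=
  SimpleGraph.dist_eq_one_iff_adj.2 h

lemma pg_dist_nonadj {x y : G} (hne : x ≠ y) (h : ¬ (powerGraph G).Adj x y) :
    (powerGraph G).dist x y = 2 := by
  have hx : x ≠ 1 := by
    rintro rfl
    exact h ((pg_adj_one (Ne.symm hne)).symm)
  have hy : y ≠ 1 := by
    rintro rfl
    exact h (pg_adj_one hne)
  have hle : (powerGraph G).dist x y ≤ 2 := by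
    calc (powerGraph G).dist x y ≤ (powerGraph G).dist x 1 + (powerGraph G).dist 1 y :=
          pg_connected.dist_triangle
    _ ≤ 1 + 1 := by
        gcongr <;> simp [pg_dist_adj (pg_adj_one hx), pg_dist_adj (pg_adj_one hy).symm]
    _ = 2 := rfl
  have h0 : (powerGraph G).dist x y ≠ 0 := by
    intro h0
    rcases SimpleGraph.dist_eq_zero_iff_eq_or_not_reachable.1 h0 with h' | h'
    · exact hne h'
    · exact h' (pg_connected.preconnected x y)
  have h1 : (powerGraph G).dist x y ≠ 1 := fun h1 => h (SimpleGraph.dist_eq_one_iff_adj.1 h1)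
  omega

/-- Reformulation of resolving for power graphs of finite groups. -/
lemma pg_resolves_iff {W : Set G} : IsResolvingSet (powerGraph G) W ↔
    ∀ u v : G, u ≠ v → u ∉ W → v ∉ W →
      ∃ w ∈ W, ¬ ((powerGraph G).Adj u w ↔ (powerGraph G).Adj v w) := by
  constructor
  · intro hres u v huv hu hv
    obtain ⟨w, hwW, hd⟩ := hres u v huv
    refine ⟨w, hwW, fun hiff => hd ?_⟩
    have hwu : w ≠ u := fun h => hu (h ▸ hwW)
    have hwv : w ≠ v := fun h => hv (h ▸ hwW)
    by_cases ha : (powerGraph G).Adj u w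
    · rw [pg_dist_adj ha, pg_dist_adj (hiff.1 ha)]
    · rw [pg_dist_nonadj (Ne.symm hwu) ha, pg_dist_nonadj (Ne.symm hwv) (fun hb => ha (hiff.2 hb))]
  · intro hcond u v huv
    by_cases hu : u ∈ W
    · refine ⟨u, hu, ?_⟩
      rw [SimpleGraph.dist_self]
      intro h
      have := SimpleGraph.dist_eq_zero_iff_eq_or_not_reachable.1 h.symm
      rcases this with h' | h'
      · exact huv h'.symm
      · exact h' (pg_connected.preconnected v u)
    by_cases hv : v ∈ W
    · refine ⟨v, hv, ?_⟩
      rw [SimpleGraph.dist_self]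
      intro h
      have := SimpleGraph.dist_eq_zero_iff_eq_or_not_reachable.1 h
      rcases this with h' | h'
      · exact huv h'
      · exact h' (pg_connected.preconnected u v)
    obtain ⟨w, hwW, hne⟩ := hcond u v huv hu hv
    have hwu : w ≠ u := fun h => hu (h ▸ hwW)
    have hwv : w ≠ v := fun h => hv (h ▸ hwW)
    refine ⟨w, hwW, ?_⟩
    by_cases ha : (powerGraph G).Adj u w
    · have hb : ¬ (powerGraph G).Adj v w := fun hb => hne ⟨fun _ => hb, fun _ => ha⟩
      rw [pg_dist_adj ha, pg_dist_nonadj (Ne.symm hwv) hb]; omega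
    · have hb : (powerGraph G).Adj v w := by
        by_contra hb
        exact hne ⟨fun h' => absurd h' ha, fun h' => absurd h' hb⟩
      rw [pg_dist_adj hb, pg_dist_nonadj (Ne.symm hwu) ha]; omega

lemma pg_univ_resolves : IsResolvingSet (powerGraph G) Set.univ := by
  intro u v huv
  refine ⟨u, Set.mem_univ u, ?_⟩
  rw [SimpleGraph.dist_self]
  intro h
  rcases SimpleGraph.dist_eq_zero_iff_eq_or_not_reachable.1 h.symm with h' | h'
  · exact huv h'.symm
  · exact h' (pg_connected.preconnected v u)

end general

section dihedral
open DihedralGroup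
variable {n : ℕ}

lemma r_pow (i : ZMod n) (m : ℕ) : (r i) ^ m = r ((m : ZMod n) * i) := by
  induction m with
  | zero => rw [pow_zero, Nat.cast_zero, zero_mul, DihedralGroup.one_def]
  | succ m ih =>
      rw [pow_succ, ih, r_mul_r]
      push_cast
      ring_nf

lemma sr_sq (i : ZMod n) : (sr i) * (sr i) = 1 := by
  rw [sr_mul_sr, sub_self, ← DihedralGroup.one_def]

lemma sr_pow (i : ZMod n) (m : ℕ) : (sr i) ^ m = if m % 2 = 0 then 1 else sr i := by
  induction m with
  | zero => simp
  | succ m ih =>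
      rw [pow_succ, ih]
      by_cases h : m % 2 = 0
      · simp [h, Nat.succ_mod_two_eq_one_iff.2 h]
      · have h1 : m % 2 = 1 := Nat.mod_two_eq_zero_or_one m |>.resolve_left h
        simp [h, Nat.succ_mod_two_eq_zero_iff.2 h1, sr_sq, ← DihedralGroup.one_def]

lemma zpow_ofAdd (x : ZMod n) (m : ℕ) :
    (Multiplicative.ofAdd x) ^ m = Multiplicative.ofAdd ((m : ZMod n) * x) := by
  rw [← ofAdd_nsmul, nsmul_eq_mul]

lemma sr_ne_one (i : ZMod n) : sr i ≠ 1 := by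
  rw [DihedralGroup.one_def]; exact fun h => by cases h

end dihedral

section dihedral2
open DihedralGroup
variable {n : ℕ}

lemma adj_sr_iff (i : ZMod n) (x : DihedralGroup n) :
    (powerGraph (DihedralGroup n)).Adj (sr i) x ↔ x = 1 := by
  constructor
  · intro h
    obtain ⟨hne, hrel | hrel⟩ := pg_adj.1 h
    · obtain ⟨m, hm, hx⟩ := hrel
      rw [sr_pow] at hx
      by_cases h2 : m % 2 = 0
      · simpa [h2] using hx
      · simp only [h2, if_false] at hx
        exact absurd hx.symm hne
    · obtain ⟨m, hm, hx⟩ := hrel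
      cases x with
      | r j => rw [_root_.r_pow] at hx; cases hx
      | sr j =>
          rw [sr_pow] at hx
          by_cases h2 : m % 2 = 0
          · simp only [h2, if_true] at hx
            exact absurd hx (sr_ne_one i)
          · simp only [h2, if_false] at hx
            cases hx
            exact absurd rfl hne
  · rintro rfl
    refine pg_adj.2 ⟨sr_ne_one i, Or.inl ⟨2, by norm_num, ?_⟩⟩
    rw [pow_two, sr_sq]

lemma adj_rr_iff (i j : ZMod n) :
    (powerGraph (DihedralGroup n)).Adj (r i) (r j) ↔
      (powerGraph (Multiplicative (ZMod n))).Adj (Multiplicative.ofAdd i) (Multiplicative.ofAdd j) := by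
  rw [pg_adj, pg_adj]
  constructor
  · rintro ⟨hne, hrel⟩
    refine ⟨fun h => hne ?_, ?_⟩
    · have : i = j := by simpa using congrArg Multiplicative.toAdd h
      rw [this]
    rcases hrel with ⟨m, hm, hx⟩ | ⟨m, hm, hx⟩
    · rw [_root_.r_pow] at hx
      cases hx
      exact Or.inl ⟨m, hm, by rw [zpow_ofAdd]⟩
    · rw [_root_.r_pow] at hx
      cases hx
      exact Or.inr ⟨m, hm, by rw [zpow_ofAdd]⟩
  · rintro ⟨hne, hrel⟩
    refine ⟨fun h => hne ?_, ?_⟩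
    · cases h; rfl
    rcases hrel with ⟨m, hm, hx⟩ | ⟨m, hm, hx⟩
    · rw [zpow_ofAdd] at hx
      have : j = (m : ZMod n) * i := by simpa using congrArg Multiplicative.toAdd hx
      exact Or.inl ⟨m, hm, by rw [_root_.r_pow, this]⟩
    · rw [zpow_ofAdd] at hx
      have : i = (m : ZMod n) * j := by simpa using congrArg Multiplicative.toAdd hx
      exact Or.inr ⟨m, hm, by rw [_root_.r_pow, this]⟩

lemma zadj_unit {u : ZMod n} [NeZero n] (hu : IsUnit u) {z : Multiplicative (ZMod n)}
    (hz : z ≠ Multiplicative.ofAdd u) :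
    (powerGraph (Multiplicative (ZMod n))).Adj z (Multiplicative.ofAdd u) := by
  have hnpos : 0 < n := Nat.pos_of_ne_zero (NeZero.ne n)
  refine pg_adj.2 ⟨hz, Or.inr ⟨(hu.unit⁻¹.val * Multiplicative.toAdd z).val + n,
    by omega, ?_⟩⟩
  rw [zpow_ofAdd]
  push_cast
  rw [ZMod.natCast_val, ZMod.cast_id, ZMod.natCast_self, add_zero]
  have key : (↑hu.unit⁻¹ : ZMod n) * Multiplicative.toAdd z * u = Multiplicative.toAdd z := by
    rw [mul_comm _ (Multiplicative.toAdd z), mul_assoc]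
    nth_rewrite 2 [← IsUnit.unit_spec hu]
    simp
  rw [key]
  simp

end dihedral2

section comb
open DihedralGroup

/-- Resolving condition for the cyclic power graph, in adjacency form. -/
def ResZ (n : ℕ) (S : Set (Multiplicative (ZMod n))) : Prop :=
  ∀ z₁ z₂ : Multiplicative (ZMod n), z₁ ≠ z₂ → z₁ ∉ S → z₂ ∉ S →
    ∃ w ∈ S, ¬ ((powerGraph (Multiplicative (ZMod n))).Adj z₁ w ↔
      (powerGraph (Multiplicative (ZMod n))).Adj z₂ w)

/-- The condition on the cyclic part of a resolving set of the dihedral power graph. -/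
def CondS (n : ℕ) (S : Set (Multiplicative (ZMod n))) : Prop :=
  (∀ z₁ z₂ : Multiplicative (ZMod n), z₁ ≠ z₂ → z₁ ≠ 1 → z₂ ≠ 1 → z₁ ∉ S → z₂ ∉ S →
    ∃ w ∈ S, ¬ ((powerGraph (Multiplicative (ZMod n))).Adj z₁ w ↔
      (powerGraph (Multiplicative (ZMod n))).Adj z₂ w)) ∧
  (∀ z : Multiplicative (ZMod n), z ≠ 1 → z ∉ S →
    ∃ w ∈ S, w ≠ 1 ∧ (powerGraph (Multiplicative (ZMod n))).Adj z w)

variable {n : ℕ} [NeZero n]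

lemma zone_ne_zero (hn : 3 ≤ n) : (1 : ZMod n) ≠ 0 := by
  intro h
  have : ((1 : ℕ) : ZMod n) = 0 := by exact_mod_cast h
  have := (ZMod.natCast_eq_zero_iff 1 n).1 this
  have := Nat.le_of_dvd one_pos this
  omega

lemma zneg_one_ne_zero (hn : 3 ≤ n) : (-1 : ZMod n) ≠ 0 := by
  intro h
  exact zone_ne_zero hn (by linear_combination -h)

lemma zone_ne_neg_one (hn : 3 ≤ n) : (1 : ZMod n) ≠ -1 := by
  intro h
  have h2 : ((2 : ℕ) : ZMod n) = 0 := by push_cast; linear_combination h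
  have := (ZMod.natCast_eq_zero_iff 2 n).1 h2
  have := Nat.le_of_dvd two_pos this
  omega

lemma ofAdd_eq_one' {x : ZMod n} : Multiplicative.ofAdd x = 1 ↔ x = 0 := by
  constructor
  · intro h; simpa using congrArg Multiplicative.toAdd h
  · rintro rfl; rfl

lemma adj_aZ (hn : 3 ≤ n) {z : Multiplicative (ZMod n)}
    (hz : z ≠ Multiplicative.ofAdd (1 : ZMod n)) :
    (powerGraph (Multiplicative (ZMod n))).Adj z (Multiplicative.ofAdd (1 : ZMod n)) :=
  zadj_unit isUnit_one hz

lemma adj_bZ (hn : 3 ≤ n) {z : Multiplicative (ZMod n)}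
    (hz : z ≠ Multiplicative.ofAdd (-1 : ZMod n)) :
    (powerGraph (Multiplicative (ZMod n))).Adj z (Multiplicative.ofAdd (-1 : ZMod n)) :=
  zadj_unit isUnit_one.neg hz

lemma aZ_ne_one (hn : 3 ≤ n) : Multiplicative.ofAdd (1 : ZMod n) ≠ 1 := by
  rw [Ne, ofAdd_eq_one']; exact zone_ne_zero hn

lemma bZ_ne_one (hn : 3 ≤ n) : Multiplicative.ofAdd (-1 : ZMod n) ≠ 1 := by
  rw [Ne, ofAdd_eq_one']; exact zneg_one_ne_zero hn

lemma aZ_ne_bZ (hn : 3 ≤ n) :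
    Multiplicative.ofAdd (1 : ZMod n) ≠ Multiplicative.ofAdd (-1 : ZMod n) := by
  intro h
  exact zone_ne_neg_one hn (by simpa using congrArg Multiplicative.toAdd h)

/-- (a) From a resolving set of the cyclic power graph, drop one vertex and get `CondS`. -/
lemma exists_cond_of_resz (hn : 3 ≤ n) {S' : Set (Multiplicative (ZMod n))}
    (hres : ResZ n S') : ∃ S, CondS n S ∧ S.ncard + 1 = S'.ncard := by
  set Γ := powerGraph (Multiplicative (ZMod n)) with hΓ
  set a := Multiplicative.ofAdd (1 : ZMod n) with ha
  set b := Multiplicative.ofAdd (-1 : ZMod n) with hb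
  by_cases h1 : (1 : Multiplicative (ZMod n)) ∈ S'
  · -- Case A : drop the identity
    refine ⟨S' \ {1}, ⟨?_, ?_⟩, Set.ncard_diff_singleton_add_one h1 (Set.toFinite S')⟩
    · intro z₁ z₂ hne h₁ h₂ hn₁ hn₂
      have hz₁ : z₁ ∉ S' := fun h => hn₁ ⟨h, h₁⟩
      have hz₂ : z₂ ∉ S' := fun h => hn₂ ⟨h, h₂⟩
      obtain ⟨w, hwS, hw⟩ := hres z₁ z₂ hne hz₁ hz₂
      have hw1 : w ≠ 1 := by
        rintro rfl
        exact hw ⟨fun _ => pg_adj_one h₂, fun _ => pg_adj_one h₁⟩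
      exact ⟨w, ⟨hwS, hw1⟩, hw⟩
    · -- a or b is in S'
      have hv : a ∈ S' ∨ b ∈ S' := by
        by_contra hcon
        push_neg at hcon
        obtain ⟨w, hwS, hw⟩ := hres a b (aZ_ne_bZ hn) hcon.1 hcon.2
        have hwa : w ≠ a := fun h => hcon.1 (h ▸ hwS)
        have hwb : w ≠ b := fun h => hcon.2 (h ▸ hwS)
        exact hw ⟨fun _ => ((adj_bZ hn hwb).symm : Γ.Adj b w), fun _ => (adj_aZ hn hwa).symm⟩
      rcases hv with hv | hv
      · intro z hz1 hzS
        have hza : z ≠ a := fun h => hzS (by rw [h]; exact ⟨hv, aZ_ne_one hn⟩)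
        exact ⟨a, ⟨hv, aZ_ne_one hn⟩, aZ_ne_one hn, adj_aZ hn hza⟩
      · intro z hz1 hzS
        have hzb : z ≠ b := fun h => hzS (by rw [h]; exact ⟨hv, bZ_ne_one hn⟩)
        exact ⟨b, ⟨hv, bZ_ne_one hn⟩, bZ_ne_one hn, adj_bZ hn hzb⟩
  · -- Case B : the identity is not in S'; then a, b ∈ S'; drop a
    have haS : a ∈ S' := by
      by_contra hcon
      obtain ⟨w, hwS, hw⟩ := hres 1 a (Ne.symm (aZ_ne_one hn)) h1 hcon
      have hw1 : w ≠ 1 := fun h => h1 (h ▸ hwS)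
      have hwa : w ≠ a := fun h => hcon (h ▸ hwS)
      exact hw ⟨fun _ => (adj_aZ hn hwa).symm, fun _ => (pg_adj_one hw1).symm⟩
    have hbS : b ∈ S' := by
      by_contra hcon
      obtain ⟨w, hwS, hw⟩ := hres 1 b (Ne.symm (bZ_ne_one hn)) h1 hcon
      have hw1 : w ≠ 1 := fun h => h1 (h ▸ hwS)
      have hwb : w ≠ b := fun h => hcon (h ▸ hwS)
      exact hw ⟨fun _ => (adj_bZ hn hwb).symm, fun _ => (pg_adj_one hw1).symm⟩
    refine ⟨S' \ {a}, ⟨?_, ?_⟩, Set.ncard_diff_singleton_add_one haS (Set.toFinite S')⟩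
    · -- condition (2)
      have key : ∀ z₂ : Multiplicative (ZMod n), z₂ ≠ 1 → z₂ ∉ S' → z₂ ≠ a →
          ∃ w ∈ S' \ {a}, ¬ (Γ.Adj a w ↔ Γ.Adj z₂ w) := by
        intro z₂ h₂ hz₂ hza
        obtain ⟨w, hwS, hw⟩ := hres z₂ 1 h₂ hz₂ h1
        have hw1 : w ≠ 1 := fun h => h1 (h ▸ hwS)
        have hnadj : ¬ Γ.Adj z₂ w := fun h => hw ⟨fun _ => (pg_adj_one hw1).symm, fun _ => h⟩
        have hwa : w ≠ a := by
          rintro rfl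
          exact hnadj (adj_aZ hn hza)
        refine ⟨w, ⟨hwS, hwa⟩, fun hiff => hnadj (hiff.1 ?_)⟩
        have haw : a ≠ w := fun h => hwa h.symm
        exact (adj_aZ hn (Ne.symm haw)).symm
      intro z₁ z₂ hne h₁ h₂ hn₁ hn₂
      by_cases hz₁a : z₁ = a
      · subst hz₁a
        have hz₂ : z₂ ∉ S' := fun h => hn₂ ⟨h, fun he => hne (by rw [he])⟩
        exact key z₂ h₂ hz₂ (Ne.symm hne)
      by_cases hz₂a : z₂ = a
      · subst hz₂a
        have hz₁ : z₁ ∉ S' := fun h => hn₁ ⟨h, hz₁a⟩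
        obtain ⟨w, hwS, hw⟩ := key z₁ h₁ hz₁ hz₁a
        exact ⟨w, hwS, fun hiff => hw hiff.symm⟩
      have hz₁ : z₁ ∉ S' := fun h => hn₁ ⟨h, hz₁a⟩
      have hz₂ : z₂ ∉ S' := fun h => hn₂ ⟨h, hz₂a⟩
      obtain ⟨w, hwS, hw⟩ := hres z₁ z₂ hne hz₁ hz₂
      have hwa : w ≠ a := by
        rintro rfl
        exact hw ⟨fun _ => adj_aZ hn hz₂a, fun _ => adj_aZ hn hz₁a⟩
      exact ⟨w, ⟨hwS, hwa⟩, hw⟩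
    · -- condition (3) via b
      intro z hz1 hzS
      have hba : b ≠ a := Ne.symm (aZ_ne_bZ hn)
      have hzb : z ≠ b := fun h => hzS ⟨h ▸ hbS, h ▸ hba⟩
      exact ⟨b, ⟨hbS, hba⟩, bZ_ne_one hn, adj_bZ hn hzb⟩

/-- (b) From `CondS`, add at most one vertex and get a resolving set of the cyclic graph. -/
lemma exists_resz_of_cond (hn : 3 ≤ n) {S : Set (Multiplicative (ZMod n))}
    (hS : CondS n S) : ∃ S', ResZ n S' ∧ S'.ncard ≤ S.ncard + 1 := by
  set Γ := powerGraph (Multiplicative (ZMod n)) with hΓ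
  obtain ⟨hS2, hS3⟩ := hS
  have key : ∀ z : Multiplicative (ZMod n), z ≠ 1 → z ∉ S →
      (¬ ∀ w ∈ S, Γ.Adj z w) → ∃ w ∈ S, ¬ (Γ.Adj (1 : Multiplicative (ZMod n)) w ↔ Γ.Adj z w) := by
    intro z hz1 hzS hnall
    push_neg at hnall
    obtain ⟨w, hwS, hnadj⟩ := hnall
    have hw1 : w ≠ 1 := by
      rintro rfl
      exact hnadj (pg_adj_one hz1)
    exact ⟨w, hwS, fun hiff => hnadj (hiff.1 (pg_adj_one hw1).symm)⟩
  by_cases h : ∃ z₀ : Multiplicative (ZMod n), z₀ ≠ 1 ∧ z₀ ∉ S ∧ ∀ w ∈ S, Γ.Adj z₀ w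
  · obtain ⟨z₀, hz₀1, hz₀S, hz₀adj⟩ := h
    refine ⟨insert z₀ S, ?_, Set.ncard_insert_le z₀ S⟩
    intro z₁ z₂ hne h₁ h₂
    have h₁' : z₁ ≠ z₀ ∧ z₁ ∉ S := by
      constructor <;> intro hc <;> exact h₁ (by simp [hc])
    have h₂' : z₂ ≠ z₀ ∧ z₂ ∉ S := by
      constructor <;> intro hc <;> exact h₂ (by simp [hc])
    have uniq : ∀ z : Multiplicative (ZMod n), z ≠ 1 → z ∉ S → z ≠ z₀ →
        ¬ ∀ w ∈ S, Γ.Adj z w := by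
      intro z hz1 hzS hzz₀ hall
      obtain ⟨w, hwS, hw⟩ := hS2 z z₀ hzz₀ hz1 hz₀1 hzS hz₀S
      exact hw ⟨fun _ => hz₀adj w hwS, fun _ => hall w hwS⟩
    by_cases hz₁1 : z₁ = 1
    · subst hz₁1
      have h₂1 : z₂ ≠ 1 := fun h => hne h.symm
      obtain ⟨w, hwS, hw⟩ := key z₂ h₂1 h₂'.2 (uniq z₂ h₂1 h₂'.2 h₂'.1)
      exact ⟨w, Set.mem_insert_of_mem _ hwS, hw⟩
    by_cases hz₂1 : z₂ = 1
    · subst hz₂1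
      obtain ⟨w, hwS, hw⟩ := key z₁ hz₁1 h₁'.2 (uniq z₁ hz₁1 h₁'.2 h₁'.1)
      exact ⟨w, Set.mem_insert_of_mem _ hwS, fun hiff => hw hiff.symm⟩
    obtain ⟨w, hwS, hw⟩ := hS2 z₁ z₂ hne hz₁1 hz₂1 h₁'.2 h₂'.2
    exact ⟨w, Set.mem_insert_of_mem _ hwS, hw⟩
  · push_neg at h
    refine ⟨S, ?_, by omega⟩
    intro z₁ z₂ hne h₁ h₂
    by_cases hz₁1 : z₁ = 1
    · subst hz₁1
      have h₂1 : z₂ ≠ 1 := fun h => hne h.symm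
      exact key z₂ h₂1 h₂ (by push_neg; exact h z₂ h₂1 h₂)
    by_cases hz₂1 : z₂ = 1
    · subst hz₂1
      obtain ⟨w, hwS, hw⟩ := key z₁ hz₁1 h₁ (by push_neg; exact h z₁ hz₁1 h₁)
      exact ⟨w, hwS, fun hiff => hw hiff.symm⟩
    exact hS2 z₁ z₂ hne hz₁1 hz₂1 h₁ h₂

end comb
section dside
open DihedralGroup

variable {n : ℕ} [NeZero n]

lemma r_eq_one_iff {k : ZMod n} : (r k : DihedralGroup n) = 1 ↔ k = 0 := by
  rw [DihedralGroup.one_def]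
  exact ⟨fun h => by cases h; rfl, fun h => by rw [h]⟩

lemma toAdd_eq_zero' {z : Multiplicative (ZMod n)} : Multiplicative.toAdd z = 0 ↔ z = 1 :=
  ⟨fun h => by simpa using congrArg Multiplicative.ofAdd h, fun h => by rw [h]; rfl⟩

lemma rho_inj : Function.Injective (fun z : Multiplicative (ZMod n) => r (Multiplicative.toAdd z)) := by
  intro x y h
  simp only [DihedralGroup.r.injEq] at h
  simpa using congrArg Multiplicative.ofAdd h

lemma sr_inj : Function.Injective (sr : ZMod n → DihedralGroup n) := by
  intro i j h
  cases h; rfl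

lemma disj_r_sr (A : Set (Multiplicative (ZMod n))) (T : Set (ZMod n)) :
    Disjoint ((fun z => r (Multiplicative.toAdd z)) '' A) (sr '' T) := by
  rw [Set.disjoint_left]
  rintro x ⟨z, _, rfl⟩ ⟨i, _, h⟩
  cases h

lemma ncard_ne (i₀ : ZMod n) : {i : ZMod n | i ≠ i₀}.ncard = n - 1 := by
  have h : {i : ZMod n | i ≠ i₀} = Set.univ \ {i₀} := by ext; simp
  rw [h, Set.ncard_diff (Set.subset_univ _) (Set.toFinite _), Set.ncard_univ, Nat.card_zmod,
    Set.ncard_singleton]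

/-- The dihedral resolving set built from a cyclic one. -/
def Wof (n : ℕ) (S : Set (Multiplicative (ZMod n))) : Set (DihedralGroup n) :=
  ((fun z => DihedralGroup.r (Multiplicative.toAdd z)) '' S) ∪
    (DihedralGroup.sr '' {i : ZMod n | i ≠ 0})

lemma ncard_Wof (S : Set (Multiplicative (ZMod n))) : (Wof n S).ncard = S.ncard + (n - 1) := by
  rw [Wof, Set.ncard_union_eq (disj_r_sr S _) (Set.toFinite _) (Set.toFinite _),
    Set.ncard_image_of_injective _ rho_inj, Set.ncard_image_of_injective _ sr_inj, ncard_ne]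

lemma resolve_Wof (hn : 3 ≤ n) {S : Set (Multiplicative (ZMod n))} (hS : CondS n S) :
    IsResolvingSet (powerGraph (DihedralGroup n)) (Wof n S) := by
  set Γ := powerGraph (DihedralGroup n) with hΓ
  set W := Wof n S with hW
  rw [pg_resolves_iff]
  have hsr1W : sr (1 : ZMod n) ∈ W := Or.inr ⟨1, zone_ne_zero hn, rfl⟩
  have claim1 : ∀ (i : ZMod n) (x : DihedralGroup n), sr i ∉ W → x ∉ W → sr i ≠ x →
      ∃ w ∈ W, ¬ (Γ.Adj (sr i) w ↔ Γ.Adj x w) := by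
    intro i x hiW hxW hne
    match x with
    | DihedralGroup.sr j =>
        exfalso
        have hi : i = 0 := by by_contra h; exact hiW (Or.inr ⟨i, h, rfl⟩)
        have hj : j = 0 := by by_contra h; exact hxW (Or.inr ⟨j, h, rfl⟩)
        exact hne (by rw [hi, hj])
    | DihedralGroup.r j =>
        by_cases hj : j = 0
        · subst hj
          refine ⟨sr 1, hsr1W, fun hiff => ?_⟩
          have h2 : Γ.Adj (r 0) (sr 1) := by
            rw [SimpleGraph.adj_comm, adj_sr_iff]
            exact DihedralGroup.one_def.symm
          have h1 : ¬ Γ.Adj (sr i) (sr 1) := by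
            rw [adj_sr_iff]; exact sr_ne_one 1
          exact h1 (hiff.2 h2)
        · have hzS : (Multiplicative.ofAdd j) ∉ S := by
            intro hmem
            exact hxW (Or.inl ⟨Multiplicative.ofAdd j, hmem, by simp⟩)
          obtain ⟨w', hw'S, hw'1, hw'adj⟩ :=
            hS.2 (Multiplicative.ofAdd j) (by rwa [Ne, ofAdd_eq_one']) hzS
          refine ⟨r (Multiplicative.toAdd w'), Or.inl ⟨w', hw'S, rfl⟩, fun hiff => ?_⟩
          have hadj : Γ.Adj (r j) (r (Multiplicative.toAdd w')) := by
            rw [adj_rr_iff]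
            simpa using hw'adj
          have h1 := hiff.2 hadj
          rw [adj_sr_iff, r_eq_one_iff, toAdd_eq_zero'] at h1
          exact hw'1 h1
  have claim2 : ∀ i j : ZMod n, r i ∉ W → r j ∉ W → i ≠ j →
      ∃ w ∈ W, ¬ (Γ.Adj (r i) w ↔ Γ.Adj (r j) w) := by
    have base : ∀ j : ZMod n, j ≠ 0 → ∃ w ∈ W, ¬ (Γ.Adj (r 0) w ↔ Γ.Adj (r j) w) := by
      intro j hj
      refine ⟨sr 1, hsr1W, fun hiff => ?_⟩
      have h2 : Γ.Adj (r 0) (sr 1) := by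
        rw [SimpleGraph.adj_comm, adj_sr_iff]
        exact DihedralGroup.one_def.symm
      have h1 : ¬ Γ.Adj (r j) (sr 1) := by
        rw [SimpleGraph.adj_comm, adj_sr_iff, r_eq_one_iff]; exact hj
      exact h1 (hiff.1 h2)
    intro i j hiW hjW hne
    by_cases hi : i = 0
    · subst hi; exact base j (Ne.symm hne)
    by_cases hj : j = 0
    · subst hj
      obtain ⟨w, hwW, hw⟩ := base i hi
      exact ⟨w, hwW, fun hiff => hw hiff.symm⟩
    have hiS : Multiplicative.ofAdd i ∉ S := fun hmem => hiW (Or.inl ⟨_, hmem, by simp⟩)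
    have hjS : Multiplicative.ofAdd j ∉ S := fun hmem => hjW (Or.inl ⟨_, hmem, by simp⟩)
    obtain ⟨w', hw'S, hw'⟩ := hS.1 (Multiplicative.ofAdd i) (Multiplicative.ofAdd j)
      (fun h => hne (by simpa using congrArg Multiplicative.toAdd h))
      (by rwa [Ne, ofAdd_eq_one']) (by rwa [Ne, ofAdd_eq_one']) hiS hjS
    refine ⟨r (Multiplicative.toAdd w'), Or.inl ⟨w', hw'S, rfl⟩, fun hiff => hw' ?_⟩
    have e1 : Γ.Adj (r i) (r (Multiplicative.toAdd w')) ↔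
        (powerGraph (Multiplicative (ZMod n))).Adj (Multiplicative.ofAdd i) w' := by
      rw [adj_rr_iff]; simp
    have e2 : Γ.Adj (r j) (r (Multiplicative.toAdd w')) ↔
        (powerGraph (Multiplicative (ZMod n))).Adj (Multiplicative.ofAdd j) w' := by
      rw [adj_rr_iff]; simp
    exact e1.symm.trans (hiff.trans e2)
  intro u v hne hu hv
  match u, v with
  | DihedralGroup.sr i, x => exact claim1 i x hu hv hne
  | DihedralGroup.r i, DihedralGroup.r j =>
      exact claim2 i j hu hv (fun h => hne (by rw [h]))
  | DihedralGroup.r i, DihedralGroup.sr j =>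
      obtain ⟨w, hwW, hw⟩ := claim1 j (r i) hv hu (fun h => by cases h)
      exact ⟨w, hwW, fun hiff => hw hiff.symm⟩

lemma exists_cond_of_d (hn : 3 ≤ n) {W : Set (DihedralGroup n)}
    (hW : IsResolvingSet (powerGraph (DihedralGroup n)) W) :
    ∃ S, CondS n S ∧ S.ncard + n ≤ W.ncard + 1 := by
  set Γ := powerGraph (DihedralGroup n) with hΓ
  have hres := pg_resolves_iff.1 hW
  set S₀ : Set (Multiplicative (ZMod n)) := (fun z => r (Multiplicative.toAdd z)) ⁻¹' W with hS₀
  have step1 : ∀ i j : ZMod n, sr i ∉ W → sr j ∉ W → i = j := by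
    intro i j hi hj
    by_contra hne
    obtain ⟨w, hwW, hw⟩ := hres (sr i) (sr j) (fun h => hne (by cases h; rfl)) hi hj
    apply hw
    rw [adj_sr_iff, adj_sr_iff]
  have step2 : ∀ z₁ z₂ : Multiplicative (ZMod n), z₁ ≠ z₂ → z₁ ≠ 1 → z₂ ≠ 1 →
      z₁ ∉ S₀ → z₂ ∉ S₀ → ∃ w ∈ S₀, ¬ ((powerGraph (Multiplicative (ZMod n))).Adj z₁ w ↔
        (powerGraph (Multiplicative (ZMod n))).Adj z₂ w) := by
    intro z₁ z₂ hne h₁ h₂ hn₁ hn₂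
    obtain ⟨w, hwW, hw⟩ := hres (r (Multiplicative.toAdd z₁)) (r (Multiplicative.toAdd z₂))
      (fun h => hne (by
        have : Multiplicative.toAdd z₁ = Multiplicative.toAdd z₂ := by
          simpa using h
        simpa using congrArg Multiplicative.ofAdd this)) hn₁ hn₂
    match w, hwW, hw with
    | DihedralGroup.sr k, hwW, hw =>
        exfalso
        apply hw
        have e1 : ¬ Γ.Adj (r (Multiplicative.toAdd z₁)) (sr k) := by
          rw [SimpleGraph.adj_comm, adj_sr_iff, r_eq_one_iff, toAdd_eq_zero']; exact h₁
        have e2 : ¬ Γ.Adj (r (Multiplicative.toAdd z₂)) (sr k) := by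
          rw [SimpleGraph.adj_comm, adj_sr_iff, r_eq_one_iff, toAdd_eq_zero']; exact h₂
        exact iff_of_false e1 e2
    | DihedralGroup.r k, hwW, hw =>
        have hkS : Multiplicative.ofAdd k ∈ S₀ := Set.mem_preimage.mpr (by simpa using hwW)
        refine ⟨Multiplicative.ofAdd k, hkS, fun hiff => hw ?_⟩
        have e1 : Γ.Adj (r (Multiplicative.toAdd z₁)) (r k) ↔
            (powerGraph (Multiplicative (ZMod n))).Adj z₁ (Multiplicative.ofAdd k) := by
          rw [adj_rr_iff]; simp
        have e2 : Γ.Adj (r (Multiplicative.toAdd z₂)) (r k) ↔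
            (powerGraph (Multiplicative (ZMod n))).Adj z₂ (Multiplicative.ofAdd k) := by
          rw [adj_rr_iff]; simp
        exact e1.trans (hiff.trans e2.symm)
  by_cases hmiss : ∀ i : ZMod n, sr i ∈ W
  · refine ⟨insert (Multiplicative.ofAdd (1 : ZMod n)) S₀, ⟨?_, ?_⟩, ?_⟩
    · intro z₁ z₂ hne h₁ h₂ hn₁ hn₂
      obtain ⟨w, hwS, hw⟩ := step2 z₁ z₂ hne h₁ h₂
        (fun h => hn₁ (Set.mem_insert_of_mem _ h)) (fun h => hn₂ (Set.mem_insert_of_mem _ h))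
      exact ⟨w, Set.mem_insert_of_mem _ hwS, hw⟩
    · intro z hz1 hzS
      have hza : z ≠ Multiplicative.ofAdd (1 : ZMod n) := fun h => hzS (h ▸ Set.mem_insert _ _)
      exact ⟨Multiplicative.ofAdd (1 : ZMod n), Set.mem_insert _ _, aZ_ne_one hn, adj_aZ hn hza⟩
    · have hsub : ((fun z => r (Multiplicative.toAdd z)) '' S₀) ∪
          (sr '' (Set.univ : Set (ZMod n))) ⊆ W := by
        rintro x (⟨z, hz, rfl⟩ | ⟨i, _, rfl⟩)
        · exact hz
        · exact hmiss i
      have hcard := Set.ncard_le_ncard hsub (Set.toFinite W)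
      rw [Set.ncard_union_eq (disj_r_sr _ _) (Set.toFinite _) (Set.toFinite _),
        Set.ncard_image_of_injective _ rho_inj, Set.ncard_image_of_injective _ sr_inj,
        Set.ncard_univ, Nat.card_zmod] at hcard
      have hins := Set.ncard_insert_le (Multiplicative.ofAdd (1 : ZMod n)) S₀
      omega
  · push_neg at hmiss
    obtain ⟨i₀, hi₀⟩ := hmiss
    refine ⟨S₀, ⟨step2, ?_⟩, ?_⟩
    · intro z hz1 hzS
      obtain ⟨w, hwW, hw⟩ := hres (sr i₀) (r (Multiplicative.toAdd z))
        (fun h => by cases h) hi₀ hzS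
      match w, hwW, hw with
      | DihedralGroup.sr k, hwW, hw =>
          exfalso
          apply hw
          have e1 : ¬ Γ.Adj (sr i₀) (sr k) := by rw [adj_sr_iff]; exact sr_ne_one k
          have e2 : ¬ Γ.Adj (r (Multiplicative.toAdd z)) (sr k) := by
            rw [SimpleGraph.adj_comm, adj_sr_iff, r_eq_one_iff, toAdd_eq_zero']; exact hz1
          exact iff_of_false e1 e2
      | DihedralGroup.r k, hwW, hw =>
          by_cases hk : k = 0
          · exfalso
            subst hk
            apply hw
            have e1 : Γ.Adj (sr i₀) (r 0) := by rw [adj_sr_iff]; exact DihedralGroup.one_def.symm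
            have e2 : Γ.Adj (r (Multiplicative.toAdd z)) (r 0) := by
              rw [adj_rr_iff]
              simpa using pg_adj_one hz1
            exact iff_of_true e1 e2
          · have hkS : Multiplicative.ofAdd k ∈ S₀ := Set.mem_preimage.mpr (by simpa using hwW)
            refine ⟨Multiplicative.ofAdd k, hkS, by rwa [Ne, ofAdd_eq_one'], ?_⟩
            have e1 : ¬ Γ.Adj (sr i₀) (r k) := by rw [adj_sr_iff, r_eq_one_iff]; exact hk
            have hadj : Γ.Adj (r (Multiplicative.toAdd z)) (r k) := by
              by_contra hcon
              exact hw (iff_of_false e1 hcon)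
            rw [adj_rr_iff] at hadj
            simpa using hadj
    · have hsub : ((fun z => r (Multiplicative.toAdd z)) '' S₀) ∪
          (sr '' {i : ZMod n | i ≠ i₀}) ⊆ W := by
        rintro x (⟨z, hz, rfl⟩ | ⟨i, hi, rfl⟩)
        · exact hz
        · by_contra hcon
          exact hi (step1 i i₀ hcon hi₀)
      have hcard := Set.ncard_le_ncard hsub (Set.toFinite W)
      rw [Set.ncard_union_eq (disj_r_sr _ _) (Set.toFinite _) (Set.toFinite _),
        Set.ncard_image_of_injective _ rho_inj, Set.ncard_image_of_injective _ sr_inj,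
        ncard_ne] at hcard
      omega

end dside

/-- `β(P_{D_{2n}}) = β(P_{Z_n}) + n - 2` for `n ≥ 3`. -/
theorem metricDim_powerGraph_dihedral (n : ℕ) (hn : 3 ≤ n) :
    metricDim (powerGraph (DihedralGroup n)) =
      metricDim (powerGraph (Multiplicative (ZMod n))) + n - 2 := by
  haveI : NeZero n := ⟨by omega⟩
  have hDne : {k | ∃ W : Set (DihedralGroup n), W.Finite ∧ W.ncard = k ∧
      IsResolvingSet (powerGraph (DihedralGroup n)) W}.Nonempty :=
    ⟨_, Set.univ, Set.finite_univ, rfl, pg_univ_resolves⟩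
  have hZne : {k | ∃ W : Set (Multiplicative (ZMod n)), W.Finite ∧ W.ncard = k ∧
      IsResolvingSet (powerGraph (Multiplicative (ZMod n))) W}.Nonempty :=
    ⟨_, Set.univ, Set.finite_univ, rfl, pg_univ_resolves⟩
  obtain ⟨WD, hWDfin, hWDcard, hWDres⟩ := Nat.sInf_mem hDne
  obtain ⟨WZ, hWZfin, hWZcard, hWZres⟩ := Nat.sInf_mem hZne
  have hβD : metricDim (powerGraph (DihedralGroup n)) =
      sInf {k | ∃ W : Set (DihedralGroup n), W.Finite ∧ W.ncard = k ∧
        IsResolvingSet (powerGraph (DihedralGroup n)) W} := rfl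
  have hβZ : metricDim (powerGraph (Multiplicative (ZMod n))) =
      sInf {k | ∃ W : Set (Multiplicative (ZMod n)), W.Finite ∧ W.ncard = k ∧
        IsResolvingSet (powerGraph (Multiplicative (ZMod n))) W} := rfl
  rw [← hβD] at hWDcard
  rw [← hβZ] at hWZcard
  -- upper bound
  have hresz : ResZ n WZ := pg_resolves_iff.1 hWZres
  obtain ⟨S, hS, hScard⟩ := exists_cond_of_resz hn hresz
  have hWres := resolve_Wof hn hS
  have hle1 : metricDim (powerGraph (DihedralGroup n)) ≤ S.ncard + (n - 1) := by
    rw [hβD]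
    exact Nat.sInf_le ⟨Wof n S, Set.toFinite _, ncard_Wof S, hWres⟩
  -- lower bound
  obtain ⟨S₂, hS₂, hcount⟩ := exists_cond_of_d hn hWDres
  obtain ⟨S', hS'res, hS'card⟩ := exists_resz_of_cond hn hS₂
  have hle2 : metricDim (powerGraph (Multiplicative (ZMod n))) ≤ S'.ncard := by
    rw [hβZ]
    exact Nat.sInf_le ⟨S', Set.toFinite _, rfl, pg_resolves_iff.2 hS'res⟩
  rw [hWDcard] at hcount
  rw [hWZcard] at hScard
  omega
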